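/- Let r > 0 and suppose ψ(−ir) = 0. Let Λ : [0,1] → ℂ satisfy the variational equation −Λ''(x) + q(x)Λ(x) = −r²Λ(x) + 2ir·φ(x,ir) with Λ(0) = 0 and Λ'(0) = 0 (so Λ is the k-derivative of φ(·,k) at k = ir). Then 2ir·∫₀¹ φ(t,ir)² dt = φ(1,ir)·( r·Λ(1) − Λ'(1) ); equivalently, φ(1,ir)² − 2r·∫₀¹ φ(t,ir)² dt = φ(1,ir)·( φ(1,ir) + i·r·Λ(1) − i·Λ'(1) ). -/

import Mathlib

set_option maxHeartbeats 1000000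


open MeasureTheory Set

noncomputable section

/-- `y` solves `-y'' + q y = E y` on `[0,∞)`: `y` is continuously differentiable with
derivative `y'`, `y'` is absolutely continuous (an indefinite integral of a locally
integrable `y''`), and the equation holds for a.e. `x ≥ 0`. -/
def SchrodingerSol (q : ℝ → ℂ) (E : ℂ) (y y' : ℝ → ℂ) : Prop :=
  (∀ x : ℝ, 0 ≤ x → HasDerivAt y (y' x) x) ∧
  ∃ y'' : ℝ → ℂ,
    (∀ X : ℝ, IntegrableOn y'' (Icc 0 X)) ∧
    (∀ x : ℝ, 0 ≤ x → y' x = y' 0 + ∫ t in (0:ℝ)..x, y'' t) ∧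
    (∀ᵐ x : ℝ, 0 ≤ x → -y'' x + q x * y x = E * y x)

/-- The Jost solution `f₊(·,k)` (with derivative `f'`): it solves
`-y'' + q y = k² y` and equals `e^{ikx}` for `x ≥ 1`. -/
def IsJost (q : ℝ → ℂ) (k : ℂ) (f f' : ℝ → ℂ) : Prop :=
  SchrodingerSol q (k ^ 2) f f' ∧
  ∀ x : ℝ, 1 ≤ x → f x = Complex.exp (Complex.I * k * (x : ℂ))

/-- The fundamental solution `φ(·,k)` (with derivative `y'`): it solves
`-y'' + q y = k² y` with `y(0) = 0`, `y'(0) = 1`. -/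
def IsPhi (q : ℝ → ℂ) (k : ℂ) (y y' : ℝ → ℂ) : Prop :=
  SchrodingerSol q (k ^ 2) y y' ∧ y 0 = 0 ∧ y' 0 = 1

/-- `Λ` solves the variational equation `-Λ'' + q Λ = k² Λ + 2k φ` on `[0,1]`
with `Λ(0) = Λ'(0) = 0` (so `Λ = ∂φ/∂k`). -/
def VarSol (q : ℝ → ℂ) (k : ℂ) (φ Λ Λ' : ℝ → ℂ) : Prop :=
  (∀ x ∈ Icc (0:ℝ) 1, HasDerivAt Λ (Λ' x) x) ∧
  (∃ Λ'' : ℝ → ℂ,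
    IntegrableOn Λ'' (Icc (0:ℝ) 1) ∧
    (∀ x ∈ Icc (0:ℝ) 1, Λ' x = Λ' 0 + ∫ t in (0:ℝ)..x, Λ'' t) ∧
    (∀ᵐ x : ℝ, x ∈ Icc (0:ℝ) 1 →
      -Λ'' x + q x * Λ x = k ^ 2 * Λ x + 2 * k * φ x)) ∧
  Λ 0 = 0 ∧ Λ' 0 = 0

/-- If `ψ(-ir) = 0` (`r > 0`) and `Λ` is the `k`-derivative of
`φ(·,k)` at `k = ir`, then `2ir ∫₀¹ φ(t,ir)² dt = φ(1,ir) (r Λ(1) - Λ'(1))`;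
equivalently `φ(1,ir)² - 2r ∫₀¹ φ(t,ir)² dt = φ(1,ir)(φ(1,ir) + irΛ(1) - iΛ'(1))`. -/
lemma fubini_step (g w : ℝ → ℂ) (hg : IntegrableOn g (Ioc (0:ℝ) 1))
    (hw : ContinuousOn w (Icc (0:ℝ) 1)) :
    ∫ t in Ioc (0:ℝ) 1, (∫ s in Ioc (0:ℝ) t, g s) * w t
      = ∫ s in Ioc (0:ℝ) 1, g s * (∫ t in Icc s 1, w t) := by
  set μ := volume.restrict (Ioc (0:ℝ) 1)
  have hwi : Integrable w μ := by
    have : IntegrableOn w (Icc (0:ℝ) 1) := hw.integrableOn_Icc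
    exact this.mono_set Ioc_subset_Icc_self
  set F : ℝ → ℝ → ℂ := fun s t =>
    ({p : ℝ × ℝ | p.1 ≤ p.2}.indicator (fun p => g p.1 * w p.2)) (s, t) with hF
  have hS : MeasurableSet {p : ℝ × ℝ | p.1 ≤ p.2} :=
    measurableSet_le measurable_fst measurable_snd
  have hFint : Integrable (Function.uncurry F) (μ.prod μ) := by
    have : Integrable (fun p : ℝ × ℝ => g p.1 * w p.2) (μ.prod μ) := hg.mul_prod hwi
    exact this.indicator hS
  have swap := MeasureTheory.integral_integral_swap hFint
  -- ∫ s, ∫ t, F s t dμ dμ = ∫ t, ∫ s, F s t dμ dμ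
  have lhs_eq : (∫ t, ∫ s, F s t ∂μ ∂μ) = ∫ t in Ioc (0:ℝ) 1, (∫ s in Ioc (0:ℝ) t, g s) * w t := by
    refine setIntegral_congr_fun measurableSet_Ioc (fun t ht => ?_)
    have : (fun s => F s t) = (Iic t).indicator (fun s => g s * w t) := by
      funext s
      by_cases h : s ≤ t <;> simp [hF, Set.indicator, h]
    rw [this, setIntegral_indicator measurableSet_Iic]
    have : Ioc (0:ℝ) 1 ∩ Iic t = Ioc 0 t := by
      ext s; constructor
      · rintro ⟨⟨h1, _⟩, h3⟩; exact ⟨h1, h3⟩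
      · rintro ⟨h1, h2⟩; exact ⟨⟨h1, h2.trans ht.2⟩, h2⟩
    rw [this, integral_mul_const]
  have rhs_eq : (∫ s, ∫ t, F s t ∂μ ∂μ) = ∫ s in Ioc (0:ℝ) 1, g s * (∫ t in Icc s 1, w t) := by
    refine setIntegral_congr_fun measurableSet_Ioc (fun s hs => ?_)
    have : (fun t => F s t) = (Ici s).indicator (fun t => g s * w t) := by
      funext t
      by_cases h : s ≤ t <;> simp [hF, Set.indicator, h]
    rw [this, setIntegral_indicator measurableSet_Ici]
    have : Ioc (0:ℝ) 1 ∩ Ici s = Icc s 1 := by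
      ext t; constructor
      · rintro ⟨⟨_, h2⟩, h3⟩; exact ⟨h3, h2⟩
      · rintro ⟨h1, h2⟩; exact ⟨⟨lt_of_lt_of_le hs.1 h1, h2⟩, h1⟩
    rw [this, integral_const_mul]
  rw [← lhs_eq, ← swap, rhs_eq]

lemma primCont (u' u'' : ℝ → ℂ) (b : ℝ)
    (hu'' : IntegrableOn u'' (Icc (0:ℝ) b))
    (hu' : ∀ x ∈ Icc (0:ℝ) b, u' x = u' 0 + ∫ t in (0:ℝ)..x, u'' t) :
    ContinuousOn u' (Icc (0:ℝ) b) := by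
  rcases le_or_gt 0 b with hb | hb
  · have huIcc : uIcc (0:ℝ) b = Icc 0 b := uIcc_of_le hb
    have h2 : IntegrableOn u'' (uIcc (0:ℝ) b) := by rwa [huIcc]
    have h3 := intervalIntegral.continuousOn_primitive_interval h2
    rw [huIcc] at h3
    exact (continuousOn_const.add h3).congr hu'
  · rw [Icc_eq_empty_of_lt hb]; exact continuousOn_empty _


lemma fm'_one
    (r : ℝ) (fm fm' fm'' : ℝ → ℂ)
    (hfmd : ∀ x : ℝ, 0 ≤ x → HasDerivAt fm (fm' x) x)
    (hfm''int : IntegrableOn fm'' (Icc (0:ℝ) 2))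
    (hfm'prim : ∀ x : ℝ, 0 ≤ x → fm' x = fm' 0 + ∫ t in (0:ℝ)..x, fm'' t)
    (hfmexp : ∀ x : ℝ, 1 ≤ x → fm x = Complex.exp ((r:ℂ) * (x:ℂ))) :
    fm' 1 = (r:ℂ) * Complex.exp (r:ℂ) := by
  have hDexp : ∀ x : ℝ, HasDerivAt (fun y : ℝ => Complex.exp ((r:ℂ) * (y:ℂ)))
      ((r:ℂ) * Complex.exp ((r:ℂ) * (x:ℂ))) x := by
    intro x
    have h1 : HasDerivAt (fun z : ℂ => Complex.exp ((r:ℂ) * z))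
        (Complex.exp ((r:ℂ) * (x:ℂ)) * ((r:ℂ) * 1)) (x:ℂ) :=
      (Complex.hasDerivAt_exp ((r:ℂ) * (x:ℂ))).comp (x:ℂ)
        ((hasDerivAt_id ((x:ℝ):ℂ)).const_mul (r:ℂ))
    simpa [mul_comm] using h1.comp_ofReal
  have hval : ∀ x ∈ Ioo (1:ℝ) 2, fm' x = (r:ℂ) * Complex.exp ((r:ℂ) * (x:ℂ)) := by
    intro x hx
    have hev : fm =ᶠ[nhds x] fun y : ℝ => Complex.exp ((r:ℂ) * (y:ℂ)) := by
      filter_upwards [Ioi_mem_nhds hx.1] with y hy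
      exact hfmexp y (le_of_lt hy)
    have h2 : HasDerivAt fm ((r:ℂ) * Complex.exp ((r:ℂ) * (x:ℂ))) x :=
      (hDexp x).congr_of_eventuallyEq hev
    exact (hfmd x (by linarith [hx.1])).unique h2
  have hcont : ContinuousOn fm' (Icc (0:ℝ) 2) :=
    primCont fm' fm'' 2 hfm''int (fun x hx => hfm'prim x hx.1)
  have hmem : (1:ℝ) ∈ Icc (0:ℝ) 2 := by norm_num
  have htendsto1 : Filter.Tendsto fm' (nhdsWithin 1 (Ioo (1:ℝ) 2)) (nhds (fm' 1)) :=
    (hcont 1 hmem).mono_left (nhdsWithin_mono 1 (fun y hy => ⟨by linarith [hy.1], le_of_lt hy.2⟩))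
  have htendsto2 : Filter.Tendsto fm' (nhdsWithin 1 (Ioo (1:ℝ) 2))
      (nhds ((r:ℂ) * Complex.exp ((r:ℂ) * ((1:ℝ):ℂ)))) := by
    have hc : Filter.Tendsto (fun y : ℝ => (r:ℂ) * Complex.exp ((r:ℂ) * (y:ℂ)))
        (nhdsWithin 1 (Ioo (1:ℝ) 2)) (nhds ((r:ℂ) * Complex.exp ((r:ℂ) * ((1:ℝ):ℂ)))) := by
      apply Filter.Tendsto.mono_left _ nhdsWithin_le_nhds
      exact ((hDexp (1:ℝ)).continuousAt.tendsto).const_mul ((r:ℂ))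
    exact hc.congr' (by
      filter_upwards [self_mem_nhdsWithin] with y hy
      exact (hval y hy).symm)
  haveI : Filter.NeBot (nhdsWithin 1 (Ioo (1:ℝ) 2)) := by
    rw [← mem_closure_iff_nhdsWithin_neBot, closure_Ioo (by norm_num : (1:ℝ) ≠ 2)]
    exact ⟨le_rfl, by norm_num⟩
  have := tendsto_nhds_unique htendsto1 htendsto2
  simpa using this


lemma ibp (u' u'' v v' : ℝ → ℂ)
    (hu'' : IntegrableOn u'' (Icc (0:ℝ) 1))
    (hu' : ∀ x ∈ Icc (0:ℝ) 1, u' x = u' 0 + ∫ t in (0:ℝ)..x, u'' t)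
    (hv : ∀ x ∈ Icc (0:ℝ) 1, HasDerivAt v (v' x) x)
    (hv' : ContinuousOn v' (Icc (0:ℝ) 1)) :
    ∫ t in (0:ℝ)..1, u'' t * v t
      = u' 1 * v 1 - u' 0 * v 0 - ∫ t in (0:ℝ)..1, u' t * v' t := by
  have h01 : (0:ℝ) ≤ 1 := zero_le_one
  have huIcc : uIcc (0:ℝ) 1 = Icc 0 1 := uIcc_of_le h01
  have hu''Ioc : IntegrableOn u'' (Ioc (0:ℝ) 1) := hu''.mono_set Ioc_subset_Icc_self
  -- continuity of v and u' on Icc 0 1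
  have hvc : ContinuousOn v (Icc (0:ℝ) 1) := fun x hx => (hv x hx).continuousAt.continuousWithinAt
  have hu'c : ContinuousOn u' (Icc (0:ℝ) 1) := by
    have h2 : IntegrableOn u'' (uIcc (0:ℝ) 1) := by rwa [huIcc]
    have h3 := intervalIntegral.continuousOn_primitive_interval h2
    rw [huIcc] at h3
    exact (continuousOn_const.add h3).congr hu'
  -- FTC for v on subintervals
  have hftc : ∀ s ∈ Icc (0:ℝ) 1, (∫ t in Icc s 1, v' t) = v 1 - v s := by
    intro s hs
    have hsub : Icc s 1 ⊆ Icc (0:ℝ) 1 := Icc_subset_Icc hs.1 le_rfl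
    have hInt : IntervalIntegrable v' volume s 1 := by
      apply ContinuousOn.intervalIntegrable
      rw [uIcc_of_le hs.2]
      exact hv'.mono hsub
    have := intervalIntegral.integral_eq_sub_of_hasDerivAt (f := v) (f' := v')
      (a := s) (b := 1) (fun x hx => hv x (by rw [uIcc_of_le hs.2] at hx; exact hsub hx)) hInt
    rw [← this, intervalIntegral.integral_of_le hs.2, ← integral_Icc_eq_integral_Ioc]
  have key := fubini_step u'' v' hu''Ioc hv'
  -- rewrite LHS of key
  have lhs : (∫ t in Ioc (0:ℝ) 1, (∫ s in Ioc (0:ℝ) t, u'' s) * v' t)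
      = ∫ t in Ioc (0:ℝ) 1, (u' t - u' 0) * v' t := by
    refine setIntegral_congr_fun measurableSet_Ioc (fun t ht => ?_)
    have := hu' t ⟨ht.1.le, ht.2⟩
    rw [← intervalIntegral.integral_of_le ht.1.le]
    rw [this]; ring_nf
  have rhs : (∫ s in Ioc (0:ℝ) 1, u'' s * (∫ t in Icc s 1, v' t))
      = ∫ s in Ioc (0:ℝ) 1, u'' s * (v 1 - v s) := by
    refine setIntegral_congr_fun measurableSet_Ioc (fun s hs => ?_)
    rw [hftc s ⟨hs.1.le, hs.2⟩]
  rw [lhs, rhs] at key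
  -- now expand both sides
  have hu'i : IntervalIntegrable u' volume 0 1 := by
    apply ContinuousOn.intervalIntegrable; rwa [huIcc]
  have hv'i : IntervalIntegrable v' volume 0 1 := by
    apply ContinuousOn.intervalIntegrable; rwa [huIcc]
  have hvi : IntervalIntegrable v volume 0 1 := by
    apply ContinuousOn.intervalIntegrable; rwa [huIcc]
  have hu'v' : IntervalIntegrable (fun t => u' t * v' t) volume 0 1 := by
    apply ContinuousOn.intervalIntegrable
    rw [huIcc]; exact hu'c.mul hv'
  have hu''v : IntervalIntegrable (fun t => u'' t * v t) volume 0 1 := by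
    rw [intervalIntegrable_iff_integrableOn_Ioc_of_le h01]
    exact (hu''.mul_continuousOn hvc isCompact_Icc).mono_set Ioc_subset_Icc_self
  have hu''i : IntervalIntegrable u'' volume 0 1 := by
    rw [intervalIntegrable_iff_integrableOn_Ioc_of_le h01]
    exact hu''Ioc
  have hintv' : (∫ t in (0:ℝ)..1, v' t) = v 1 - v 0 := by
    rw [intervalIntegral.integral_of_le h01, ← integral_Icc_eq_integral_Ioc]
    exact hftc 0 (left_mem_Icc.2 h01)
  have hintu'' : (∫ t in (0:ℝ)..1, u'' t) = u' 1 - u' 0 := by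
    have := hu' 1 (right_mem_Icc.2 h01)
    rw [this]; ring
  -- expand key
  have keyL : (∫ t in Ioc (0:ℝ) 1, (u' t - u' 0) * v' t)
      = (∫ t in (0:ℝ)..1, u' t * v' t) - u' 0 * (v 1 - v 0) := by
    rw [← intervalIntegral.integral_of_le h01]
    have : ∀ t : ℝ, (u' t - u' 0) * v' t = u' t * v' t - u' 0 * v' t := fun t => by ring
    simp_rw [this]
    rw [intervalIntegral.integral_sub hu'v' (hv'i.const_mul _),
      intervalIntegral.integral_const_mul, hintv']
  have keyR : (∫ s in Ioc (0:ℝ) 1, u'' s * (v 1 - v s))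
      = (u' 1 - u' 0) * v 1 - ∫ t in (0:ℝ)..1, u'' t * v t := by
    rw [← intervalIntegral.integral_of_le h01]
    have : ∀ t : ℝ, u'' t * (v 1 - v t) = u'' t * v 1 - u'' t * v t := fun t => by ring
    simp_rw [this]
    rw [intervalIntegral.integral_sub (hu''i.mul_const _) hu''v,
      intervalIntegral.integral_mul_const, hintu'']
  rw [keyL, keyR] at key
  linear_combination key

lemma green (u u' u'' v v' v'' : ℝ → ℂ)
    (hu : ∀ x ∈ Icc (0:ℝ) 1, HasDerivAt u (u' x) x)
    (hu'' : IntegrableOn u'' (Icc (0:ℝ) 1))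
    (hu' : ∀ x ∈ Icc (0:ℝ) 1, u' x = u' 0 + ∫ t in (0:ℝ)..x, u'' t)
    (hv : ∀ x ∈ Icc (0:ℝ) 1, HasDerivAt v (v' x) x)
    (hv'' : IntegrableOn v'' (Icc (0:ℝ) 1))
    (hv' : ∀ x ∈ Icc (0:ℝ) 1, v' x = v' 0 + ∫ t in (0:ℝ)..x, v'' t) :
    ∫ t in (0:ℝ)..1, (u'' t * v t - u t * v'' t)
      = (u' 1 * v 1 - u 1 * v' 1) - (u' 0 * v 0 - u 0 * v' 0) := by
  have h01 : (0:ℝ) ≤ 1 := zero_le_one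
  have huIcc : uIcc (0:ℝ) 1 = Icc 0 1 := uIcc_of_le h01
  have hu'c := primCont u' u'' 1 hu'' hu'
  have hv'c := primCont v' v'' 1 hv'' hv'
  have huc : ContinuousOn u (Icc (0:ℝ) 1) := fun x hx => (hu x hx).continuousAt.continuousWithinAt
  have hvc : ContinuousOn v (Icc (0:ℝ) 1) := fun x hx => (hv x hx).continuousAt.continuousWithinAt
  have A := ibp u' u'' v v' hu'' hu' hv hv'c
  have B := ibp v' v'' u u' hv'' hv' hu hu'c
  have hu''v : IntervalIntegrable (fun t => u'' t * v t) volume 0 1 := by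
    rw [intervalIntegrable_iff_integrableOn_Ioc_of_le h01]
    exact (hu''.mul_continuousOn hvc isCompact_Icc).mono_set Ioc_subset_Icc_self
  have huv'' : IntervalIntegrable (fun t => u t * v'' t) volume 0 1 := by
    rw [intervalIntegrable_iff_integrableOn_Ioc_of_le h01]
    exact (hv''.continuousOn_mul huc isCompact_Icc).mono_set Ioc_subset_Icc_self
  rw [intervalIntegral.integral_sub hu''v huv'', A]
  have : (∫ t in (0:ℝ)..1, u t * v'' t) = ∫ t in (0:ℝ)..1, v'' t * u t := by
    simp_rw [mul_comm]
  rw [this, B]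
  have : (∫ t in (0:ℝ)..1, v' t * u' t) = ∫ t in (0:ℝ)..1, u' t * v' t := by
    simp_rw [mul_comm]
  rw [this]
  ring

theorem statement12
    (q : ℝ → ℝ) (hqint : Integrable q)
    (hqsupp : ∀ x : ℝ, x ∉ Icc (0:ℝ) 1 → q x = 0)
    (r : ℝ) (hr : 0 < r)
    (φ φ' fm fm' Λ Λ' : ℝ → ℂ)
    (hφ : IsPhi (fun x => (q x : ℂ)) (Complex.I * (r : ℂ)) φ φ')
    (hfm : IsJost (fun x => (q x : ℂ)) (-(Complex.I * (r : ℂ))) fm fm')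
    (hzero : fm 0 = 0)
    (hΛ : VarSol (fun x => (q x : ℂ)) (Complex.I * (r : ℂ)) φ Λ Λ') :
    (2 * Complex.I * (r : ℂ) * ∫ t in (0:ℝ)..1, (φ t) ^ 2
        = φ 1 * ((r : ℂ) * Λ 1 - Λ' 1)) ∧
    ((φ 1) ^ 2 - 2 * (r : ℂ) * ∫ t in (0:ℝ)..1, (φ t) ^ 2
        = φ 1 * (φ 1 + Complex.I * (r : ℂ) * Λ 1 - Complex.I * Λ' 1)) := by

  set k : ℂ := Complex.I * (r:ℂ) with hk
  obtain ⟨⟨hφd, φ'', hφ''int, hφ'prim, hφae⟩, hφ0, hφ'0⟩ := hφ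
  obtain ⟨⟨hfmd, fm'', hfm''int, hfm'prim, hfmae⟩, hfmexp⟩ := hfm
  obtain ⟨hΛd, ⟨Λ'', hΛ''int, hΛ'prim, hΛae⟩, hΛ0, hΛ'0⟩ := hΛ
  have h01 : (0:ℝ) ≤ 1 := zero_le_one
  have hφd1 : ∀ x ∈ Icc (0:ℝ) 1, HasDerivAt φ (φ' x) x := fun x hx => hφd x hx.1
  have hφprim1 : ∀ x ∈ Icc (0:ℝ) 1, φ' x = φ' 0 + ∫ t in (0:ℝ)..x, φ'' t :=
    fun x hx => hφ'prim x hx.1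
  have hfmd1 : ∀ x ∈ Icc (0:ℝ) 1, HasDerivAt fm (fm' x) x := fun x hx => hfmd x hx.1
  have hfmprim1 : ∀ x ∈ Icc (0:ℝ) 1, fm' x = fm' 0 + ∫ t in (0:ℝ)..x, fm'' t :=
    fun x hx => hfm'prim x hx.1
  -- the Jost solution is exp(r x) for x ≥ 1
  have hfmexp' : ∀ x : ℝ, 1 ≤ x → fm x = Complex.exp ((r:ℂ) * (x:ℂ)) := by
    intro x hx
    rw [hfmexp x hx]
    congr 1
    rw [mul_neg, ← mul_assoc, Complex.I_mul_I]
    ring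
  have fm1 : fm 1 = Complex.exp (r:ℂ) := by simpa using hfmexp' 1 le_rfl
  have fm'1 : fm' 1 = (r:ℂ) * Complex.exp (r:ℂ) :=
    fm'_one r fm fm' fm'' hfmd (hfm''int 2) hfm'prim hfmexp'
  -- Green's identity for fm and φ : the Wronskian vanishes
  have gw := green fm fm' fm'' φ φ' φ'' hfmd1 (hfm''int 1) hfmprim1 hφd1 (hφ''int 1) hφprim1
  have hzero_int : (∫ t in (0:ℝ)..1, (fm'' t * φ t - fm t * φ'' t)) = 0 := by
    rw [intervalIntegral.integral_of_le h01]
    apply integral_eq_zero_of_ae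
    have h1 : ∀ᵐ x ∂(volume.restrict (Ioc (0:ℝ) 1)), 0 ≤ x →
        -φ'' x + ((q x : ℂ)) * φ x = k ^ 2 * φ x :=
      hφae.filter_mono (ae_mono Measure.restrict_le_self)
    have h2 : ∀ᵐ x ∂(volume.restrict (Ioc (0:ℝ) 1)), 0 ≤ x →
        -fm'' x + ((q x : ℂ)) * fm x = (-k) ^ 2 * fm x :=
      hfmae.filter_mono (ae_mono Measure.restrict_le_self)
    filter_upwards [h1, h2, ae_restrict_mem measurableSet_Ioc] with x e1 e2 hx
    have e1' := e1 hx.1.le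
    have e2' := e2 hx.1.le
    show fm'' x * φ x - fm x * φ'' x = 0
    linear_combination (fm x) * e1' + (-(φ x)) * e2'
  have hw : fm' 1 * φ 1 - fm 1 * φ' 1 = 0 := by
    rw [hzero_int, hφ0, hzero] at gw
    linear_combination -gw
  have hφ'1 : φ' 1 = (r:ℂ) * φ 1 := by
    rw [fm1, fm'1] at hw
    have h3 : Complex.exp (r:ℂ) * ((r:ℂ) * φ 1 - φ' 1) = 0 := by linear_combination hw
    rcases mul_eq_zero.1 h3 with h | h
    · exact absurd h (Complex.exp_ne_zero _)
    · linear_combination -h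
  -- Green's identity for φ and Λ
  have gΛ := green φ φ' φ'' Λ Λ' Λ'' hφd1 (hφ''int 1) hφprim1 hΛd hΛ''int hΛ'prim
  have hint : (∫ t in (0:ℝ)..1, (φ'' t * Λ t - φ t * Λ'' t))
      = ∫ t in (0:ℝ)..1, 2 * Complex.I * (r:ℂ) * (φ t) ^ 2 := by
    rw [intervalIntegral.integral_of_le h01, intervalIntegral.integral_of_le h01]
    apply integral_congr_ae
    have h1 : ∀ᵐ x ∂(volume.restrict (Ioc (0:ℝ) 1)), 0 ≤ x →
        -φ'' x + ((q x : ℂ)) * φ x = k ^ 2 * φ x :=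
      hφae.filter_mono (ae_mono Measure.restrict_le_self)
    have h3 : ∀ᵐ x ∂(volume.restrict (Ioc (0:ℝ) 1)), x ∈ Icc (0:ℝ) 1 →
        -Λ'' x + ((q x : ℂ)) * Λ x = k ^ 2 * Λ x + 2 * k * φ x :=
      hΛae.filter_mono (ae_mono Measure.restrict_le_self)
    filter_upwards [h1, h3, ae_restrict_mem measurableSet_Ioc] with x e1 e3 hx
    have e1' := e1 hx.1.le
    have e3' := e3 (Ioc_subset_Icc_self hx)
    show φ'' x * Λ x - φ x * Λ'' x = 2 * Complex.I * (r:ℂ) * (φ x) ^ 2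
    linear_combination (-(Λ x)) * e1' + (φ x) * e3'
  have hpull : (∫ t in (0:ℝ)..1, 2 * Complex.I * (r:ℂ) * (φ t) ^ 2)
      = 2 * Complex.I * (r:ℂ) * ∫ t in (0:ℝ)..1, (φ t) ^ 2 := by
    rw [← intervalIntegral.integral_const_mul]
  rw [hint, hpull, hΛ0, hφ0] at gΛ
  have claim1 : 2 * Complex.I * (r:ℂ) * (∫ t in (0:ℝ)..1, (φ t) ^ 2)
      = φ 1 * ((r:ℂ) * Λ 1 - Λ' 1) := by
    linear_combination gΛ + Λ 1 * hφ'1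
  refine ⟨claim1, ?_⟩
  linear_combination Complex.I * claim1
    - 2 * (r:ℂ) * (∫ t in (0:ℝ)..1, (φ t) ^ 2) * Complex.I_sq
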